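/- Let β₁ > 0 and let μ_{β₁} be the two-sided weighting function of the symmetric Preisach butterfly operator. Then the ascending and descending branches over the input range [−β₁, β₁] are given in closed form by: f⁺(c) = −(β₁ + c)² for c ∈ [−β₁, 0]; f⁺(c) = −(β₁ − c)(β₁ + 3c) for c ∈ [0, β₁]; f⁻(c) = −(β₁ − c)² for c ∈ [0, β₁]; and f⁻(c) = −(β₁ + c)(β₁ − 3c) for c ∈ [−β₁, 0]. -/

import Mathlib

/-!
STATEMENT 9: Closed-form expressions for the ascending and descending branches
of the symmetric Preisach butterfly operator with weighting μ_{β₁} over the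
input range [−β₁, β₁].
-/

open MeasureTheory

/-- The triangular subregion `T(b₀,a₀) = {(α,β) : b₀ ≤ β ≤ α ≤ a₀}` of the
Preisach plane (points are `p = (α, β)`). -/
def preisachTriangle (b₀ a₀ : ℝ) : Set (ℝ × ℝ) :=
  {p : ℝ × ℝ | b₀ ≤ p.2 ∧ p.2 ≤ p.1 ∧ p.1 ≤ a₀}

/-- Ascending branch of the Preisach operator with weighting `μ` over the
input range `[b₀, a₀]`. -/
noncomputable def ascendingBranch (μ : ℝ × ℝ → ℝ) (b₀ a₀ v : ℝ) : ℝ :=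
  ∫ p in preisachTriangle b₀ a₀, μ p * (if p.1 < v then (1 : ℝ) else -1)

/-- Descending branch of the Preisach operator with weighting `μ` over the
input range `[b₀, a₀]`. -/
noncomputable def descendingBranch (μ : ℝ × ℝ → ℝ) (b₀ a₀ v : ℝ) : ℝ :=
  ∫ p in preisachTriangle b₀ a₀, μ p * (if p.2 > v then (-1 : ℝ) else 1)

/-- The two-sided weighting function of the symmetric Preisach butterfly
operator: `−1` on the part of `P₁ = {−β₁ < β ≤ α < β₁}` with `α ≤ −β`,
`+1` on the part with `α > −β`, and `0` outside `P₁`. -/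
noncomputable def butterflyWeight (β₁ : ℝ) : ℝ × ℝ → ℝ := fun p =>
  if -β₁ < p.2 ∧ p.2 ≤ p.1 ∧ p.1 < β₁ then
    (if p.1 ≤ -p.2 then (-1 : ℝ) else 1)
  else 0

/-! ### Auxiliary material -/

/-- Inner integral (over `β`) of the weight, as a function of `α`. -/
noncomputable def Wasc (β₁ x : ℝ) : ℝ :=
  if -β₁ < x ∧ x < β₁ then (if x ≤ 0 then -(x + β₁) else 3 * x - β₁) else 0

/-- Inner integral (over `α`) of the weight, as a function of `β`. -/
noncomputable def Wdesc (β₁ y : ℝ) : ℝ :=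
  if -β₁ < y ∧ y < β₁ then (if y ≤ 0 then 3 * y + β₁ else β₁ - y) else 0

lemma measurable_butterflyWeight (β₁ : ℝ) : Measurable (butterflyWeight β₁) := by
  unfold butterflyWeight
  refine Measurable.ite ?_ (Measurable.ite ?_ measurable_const measurable_const)
    measurable_const
  · simp only [Set.setOf_and]
    exact (measurableSet_lt measurable_const measurable_snd).inter
      ((measurableSet_le measurable_snd measurable_fst).inter
        (measurableSet_lt measurable_fst measurable_const))
  · exact measurableSet_le measurable_fst measurable_snd.neg

lemma butterflyWeight_eq_zero {β₁ : ℝ} {p : ℝ × ℝ}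
    (h : ¬(-β₁ < p.2 ∧ p.2 ≤ p.1 ∧ p.1 < β₁)) : butterflyWeight β₁ p = 0 := by
  unfold butterflyWeight; rw [if_neg h]

lemma abs_butterflyWeight_le (β₁ : ℝ) (p : ℝ × ℝ) : |butterflyWeight β₁ p| ≤ 1 := by
  unfold butterflyWeight
  split_ifs <;> norm_num

lemma butterfly_indicator (β₁ : ℝ) (c : ℝ × ℝ → ℝ) (p : ℝ × ℝ) :
    (preisachTriangle (-β₁) β₁).indicator
      (fun q => butterflyWeight β₁ q * c q) p = butterflyWeight β₁ p * c p := by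
  by_cases hp : p ∈ preisachTriangle (-β₁) β₁
  · rw [Set.indicator_of_mem hp]
  · rw [Set.indicator_of_notMem hp, butterflyWeight_eq_zero, zero_mul]
    rintro ⟨h1, h2, h3⟩
    exact hp ⟨h1.le, h2, h3.le⟩

lemma integrable_butterfly_mul (β₁ : ℝ) (c : ℝ × ℝ → ℝ)
    (hc : Measurable c) (hbc : ∀ p, |c p| ≤ 1) :
    Integrable (fun p => butterflyWeight β₁ p * c p) := by
  have hdom : Integrable ((Set.Icc ((-β₁, -β₁) : ℝ × ℝ) (β₁, β₁)).indicator
      fun _ => (1 : ℝ)) :=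
    (integrable_indicator_iff measurableSet_Icc).2
      ((integrableOn_const_iff).2 (Or.inr isCompact_Icc.measure_lt_top))
  refine hdom.mono' ((measurable_butterflyWeight β₁).mul hc).aestronglyMeasurable
    (Filter.Eventually.of_forall fun p => ?_)
  rw [Real.norm_eq_abs, abs_mul]
  by_cases hp : p ∈ Set.Icc ((-β₁, -β₁) : ℝ × ℝ) (β₁, β₁)
  · rw [Set.indicator_of_mem hp]
    nlinarith [abs_butterflyWeight_le β₁ p, hbc p, abs_nonneg (butterflyWeight β₁ p),
      abs_nonneg (c p)]
  · rw [Set.indicator_of_notMem hp, butterflyWeight_eq_zero, abs_zero, zero_mul]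
    rintro ⟨h1, h2, h3⟩
    refine hp ?_
    simp only [Set.mem_Icc, Prod.le_def]
    exact ⟨⟨by linarith, h1.le⟩, h3.le, by linarith⟩

/-- Inner integral for the ascending branch. -/
lemma inner_asc (β₁ x : ℝ) : (∫ y : ℝ, butterflyWeight β₁ (x, y)) = Wasc β₁ x := by
  by_cases hx : -β₁ < x ∧ x < β₁
  · by_cases hx0 : x ≤ 0
    · have hfun : (fun y => butterflyWeight β₁ (x, y))
          = (Set.Ioc (-β₁) x).indicator (fun _ => (-1 : ℝ)) := by
        funext y
        by_cases hy : y ∈ Set.Ioc (-β₁) x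
        · rw [Set.indicator_of_mem hy]
          unfold butterflyWeight
          rw [if_pos ⟨hy.1, hy.2, hx.2⟩, if_pos (by dsimp only; linarith [hy.2])]
        · rw [Set.indicator_of_notMem hy]
          refine butterflyWeight_eq_zero ?_
          rintro ⟨h1, h2, _⟩
          exact hy ⟨h1, h2⟩
      rw [hfun, MeasureTheory.integral_indicator measurableSet_Ioc, setIntegral_const,
        Real.volume_real_Ioc_of_le (by linarith [hx.1] : -β₁ ≤ x), smul_eq_mul]
      unfold Wasc
      rw [if_pos hx, if_pos hx0]
      ring
    · push_neg at hx0
      have hfun : (fun y => butterflyWeight β₁ (x, y))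
          = fun y => (Set.Ioc (-β₁) (-x)).indicator (fun _ => (-1 : ℝ)) y
              + (Set.Ioc (-x) x).indicator (fun _ => (1 : ℝ)) y := by
        funext y
        by_cases h1 : y ∈ Set.Ioc (-β₁) (-x)
        · have h2 : y ∉ Set.Ioc (-x) x := fun h => absurd h.1 (not_lt.2 h1.2)
          rw [Set.indicator_of_mem h1, Set.indicator_of_notMem h2]
          unfold butterflyWeight
          rw [if_pos ⟨h1.1, by dsimp only; linarith [h1.2], hx.2⟩,
            if_pos (by dsimp only; linarith [h1.2])]
          ring
        · by_cases h2 : y ∈ Set.Ioc (-x) x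
          · rw [Set.indicator_of_notMem h1, Set.indicator_of_mem h2]
            unfold butterflyWeight
            rw [if_pos ⟨by dsimp only; linarith [h2.1, hx.1], h2.2, hx.2⟩,
              if_neg (by dsimp only; push_neg; linarith [h2.1])]
            ring
          · rw [Set.indicator_of_notMem h1, Set.indicator_of_notMem h2,
              butterflyWeight_eq_zero, add_zero]
            rintro ⟨ha, hb, _⟩
            simp only [Set.mem_Ioc, not_and, not_le] at h1 h2
            exact absurd hb (not_le.2 (h2 (h1 ha)))
      have i1 : Integrable ((Set.Ioc (-β₁) (-x)).indicator (fun _ => (-1 : ℝ))) :=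
        (integrable_indicator_iff measurableSet_Ioc).2
          ((integrableOn_const_iff).2 (Or.inr measure_Ioc_lt_top))
      have i2 : Integrable ((Set.Ioc (-x) x).indicator (fun _ => (1 : ℝ))) :=
        (integrable_indicator_iff measurableSet_Ioc).2
          ((integrableOn_const_iff).2 (Or.inr measure_Ioc_lt_top))
      rw [hfun, MeasureTheory.integral_add i1 i2,
        MeasureTheory.integral_indicator measurableSet_Ioc,
        MeasureTheory.integral_indicator measurableSet_Ioc, setIntegral_const,
        setIntegral_const, Real.volume_real_Ioc_of_le (by linarith [hx.2] : -β₁ ≤ -x),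
        Real.volume_real_Ioc_of_le (by linarith : -x ≤ x), smul_eq_mul, smul_eq_mul]
      unfold Wasc
      rw [if_pos hx, if_neg (not_le.2 hx0)]
      ring
  · have hfun : (fun y => butterflyWeight β₁ (x, y)) = fun _ => (0 : ℝ) := by
      funext y
      refine butterflyWeight_eq_zero ?_
      rintro ⟨h1, h2, h3⟩
      exact hx ⟨lt_of_lt_of_le h1 h2, h3⟩
    rw [hfun, integral_zero]
    unfold Wasc
    rw [if_neg hx]

/-- Inner integral for the descending branch (away from `y = 0`). -/
lemma inner_desc (β₁ y : ℝ) (hy0 : y ≠ 0) :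
    (∫ x : ℝ, butterflyWeight β₁ (x, y)) = Wdesc β₁ y := by
  by_cases hy : -β₁ < y ∧ y < β₁
  · rcases lt_or_gt_of_ne hy0 with hneg | hpos
    · have hfun : (fun x => butterflyWeight β₁ (x, y))
          = fun x => (Set.Icc y (-y)).indicator (fun _ => (-1 : ℝ)) x
              + (Set.Ioo (-y) β₁).indicator (fun _ => (1 : ℝ)) x := by
        funext x
        by_cases h1 : x ∈ Set.Icc y (-y)
        · have h2 : x ∉ Set.Ioo (-y) β₁ := fun h => absurd h1.2 (not_le.2 h.1)
          rw [Set.indicator_of_mem h1, Set.indicator_of_notMem h2]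
          unfold butterflyWeight
          rw [if_pos ⟨hy.1, h1.1, by dsimp only; linarith [h1.2, hy.1]⟩,
            if_pos (by dsimp only; linarith [h1.2])]
          ring
        · by_cases h2 : x ∈ Set.Ioo (-y) β₁
          · rw [Set.indicator_of_notMem h1, Set.indicator_of_mem h2]
            unfold butterflyWeight
            rw [if_pos ⟨hy.1, by dsimp only; linarith [h2.1], h2.2⟩,
              if_neg (by dsimp only; push_neg; linarith [h2.1])]
            ring
          · rw [Set.indicator_of_notMem h1, Set.indicator_of_notMem h2,
              butterflyWeight_eq_zero, add_zero]
            rintro ⟨_, hb, hc⟩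
            simp only [Set.mem_Icc, not_and, not_le, Set.mem_Ioo] at h1 h2
            exact h2 (h1 hb) hc
      have i1 : Integrable ((Set.Icc y (-y)).indicator (fun _ => (-1 : ℝ))) :=
        (integrable_indicator_iff measurableSet_Icc).2
          ((integrableOn_const_iff).2 (Or.inr measure_Icc_lt_top))
      have i2 : Integrable ((Set.Ioo (-y) β₁).indicator (fun _ => (1 : ℝ))) :=
        (integrable_indicator_iff measurableSet_Ioo).2
          ((integrableOn_const_iff).2 (Or.inr measure_Ioo_lt_top))
      rw [hfun, MeasureTheory.integral_add i1 i2,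
        MeasureTheory.integral_indicator measurableSet_Icc,
        MeasureTheory.integral_indicator measurableSet_Ioo, setIntegral_const,
        setIntegral_const, Real.volume_real_Icc_of_le (by linarith : y ≤ -y),
        Real.volume_real_Ioo_of_le (by linarith [hy.1] : -y ≤ β₁), smul_eq_mul, smul_eq_mul]
      unfold Wdesc
      rw [if_pos hy, if_pos hneg.le]
      ring
    · have hfun : (fun x => butterflyWeight β₁ (x, y))
          = (Set.Ico y β₁).indicator (fun _ => (1 : ℝ)) := by
        funext x
        by_cases h1 : x ∈ Set.Ico y β₁
        · rw [Set.indicator_of_mem h1]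
          unfold butterflyWeight
          rw [if_pos ⟨hy.1, h1.1, h1.2⟩,
            if_neg (by dsimp only; push_neg; linarith [h1.1])]
        · rw [Set.indicator_of_notMem h1]
          refine butterflyWeight_eq_zero ?_
          rintro ⟨_, h3, h4⟩
          exact h1 ⟨h3, h4⟩
      rw [hfun, MeasureTheory.integral_indicator measurableSet_Ico, setIntegral_const,
        Real.volume_real_Ico_of_le (by linarith [hy.2] : y ≤ β₁), smul_eq_mul]
      unfold Wdesc
      rw [if_pos hy, if_neg (not_le.2 hpos)]
      ring
  · have hfun : (fun x => butterflyWeight β₁ (x, y)) = fun _ => (0 : ℝ) := by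
      funext x
      refine butterflyWeight_eq_zero ?_
      rintro ⟨h1, h2, h3⟩
      exact hy ⟨h1, lt_of_le_of_lt h2 h3⟩
    rw [hfun, integral_zero]
    unfold Wdesc
    rw [if_neg hy]

lemma measurable_Wasc (β₁ : ℝ) : Measurable (Wasc β₁) := by
  unfold Wasc
  refine Measurable.ite ?_ (Measurable.ite ?_ ?_ ?_) measurable_const
  · simp only [Set.setOf_and]
    exact (measurableSet_lt measurable_const measurable_id).inter
      (measurableSet_lt measurable_id measurable_const)
  · exact measurableSet_le measurable_id measurable_const
  · exact (measurable_id.add measurable_const).neg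
  · exact (measurable_const.mul measurable_id).sub measurable_const

lemma measurable_Wdesc (β₁ : ℝ) : Measurable (Wdesc β₁) := by
  unfold Wdesc
  refine Measurable.ite ?_ (Measurable.ite ?_ ?_ ?_) measurable_const
  · simp only [Set.setOf_and]
    exact (measurableSet_lt measurable_const measurable_id).inter
      (measurableSet_lt measurable_id measurable_const)
  · exact measurableSet_le measurable_id measurable_const
  · exact (measurable_const.mul measurable_id).add measurable_const
  · exact measurable_const.sub measurable_id

lemma Wasc_zero (β₁ : ℝ) : ∀ x, x ∉ Set.Ioo (-β₁) β₁ → Wasc β₁ x = 0 := by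
  intro x hx
  unfold Wasc
  rw [if_neg]
  exact fun h => hx ⟨h.1, h.2⟩

lemma Wdesc_zero (β₁ : ℝ) : ∀ y, y ∉ Set.Ioo (-β₁) β₁ → Wdesc β₁ y = 0 := by
  intro y hy
  unfold Wdesc
  rw [if_neg]
  exact fun h => hy ⟨h.1, h.2⟩

lemma abs_Wasc_le (β₁ : ℝ) (hβ₁ : 0 < β₁) (x : ℝ) : |Wasc β₁ x| ≤ 4 * β₁ := by
  unfold Wasc
  split_ifs with h h'
  · rw [abs_le]; exact ⟨by linarith [h.1, h.2], by linarith [h.1, h.2]⟩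
  · rw [abs_le]; exact ⟨by linarith [h.1, h.2], by linarith [h.1, h.2]⟩
  · rw [abs_zero]; linarith

lemma abs_Wdesc_le (β₁ : ℝ) (hβ₁ : 0 < β₁) (y : ℝ) : |Wdesc β₁ y| ≤ 4 * β₁ := by
  unfold Wdesc
  split_ifs with h h'
  · rw [abs_le]; exact ⟨by linarith [h.1, h.2], by linarith [h.1, h.2]⟩
  · rw [abs_le]; exact ⟨by linarith [h.1, h.2], by linarith [h.1, h.2]⟩
  · rw [abs_zero]; linarith

lemma integrable_W_mul (β₁ : ℝ) (hβ₁ : 0 < β₁) (W : ℝ → ℝ) (hWm : Measurable W)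
    (hW0 : ∀ x, x ∉ Set.Ioo (-β₁) β₁ → W x = 0) (hWb : ∀ x, |W x| ≤ 4 * β₁)
    (S : ℝ → ℝ) (hSm : Measurable S) (hSb : ∀ x, |S x| ≤ 1) :
    Integrable (fun x => W x * S x) := by
  have hdom : Integrable ((Set.Ioo (-β₁) β₁).indicator fun _ => 4 * β₁) :=
    (integrable_indicator_iff measurableSet_Ioo).2
      ((integrableOn_const_iff).2 (Or.inr measure_Ioo_lt_top))
  refine hdom.mono' (hWm.mul hSm).aestronglyMeasurable
    (Filter.Eventually.of_forall fun x => ?_)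
  rw [Real.norm_eq_abs, abs_mul]
  by_cases hx : x ∈ Set.Ioo (-β₁) β₁
  · rw [Set.indicator_of_mem hx]
    nlinarith [hWb x, hSb x, abs_nonneg (W x), abs_nonneg (S x)]
  · rw [Set.indicator_of_notMem hx, hW0 x hx, abs_zero, zero_mul]

lemma integral_eq_intervalIntegral (β₁ : ℝ) (hβ₁ : 0 < β₁) (f : ℝ → ℝ)
    (h0 : ∀ x, x ∉ Set.Ioo (-β₁) β₁ → f x = 0) :
    (∫ x : ℝ, f x) = ∫ x in (-β₁)..β₁, f x := by
  rw [intervalIntegral.integral_of_le (by linarith : -β₁ ≤ β₁),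
    MeasureTheory.integral_Ioc_eq_integral_Ioo,
    ← MeasureTheory.integral_indicator measurableSet_Ioo,
    Set.indicator_eq_self.2 (Function.support_subset_iff'.2 h0)]

lemma split3 (f : ℝ → ℝ) (hf : Integrable f) (a m₁ m₂ b : ℝ) :
    (∫ x in a..m₁, f x) + (∫ x in m₁..m₂, f x) + (∫ x in m₂..b, f x)
      = ∫ x in a..b, f x := by
  rw [intervalIntegral.integral_add_adjacent_intervals hf.intervalIntegrable
      hf.intervalIntegrable,
    intervalIntegral.integral_add_adjacent_intervals hf.intervalIntegrable
      hf.intervalIntegrable]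

lemma intervalIntegral_congr_Ioo {a b : ℝ} (hab : a ≤ b) (f g : ℝ → ℝ)
    (h : ∀ x ∈ Set.Ioo a b, f x = g x) :
    (∫ x in a..b, f x) = ∫ x in a..b, g x := by
  rw [intervalIntegral.integral_of_le hab, intervalIntegral.integral_of_le hab,
    MeasureTheory.integral_Ioc_eq_integral_Ioo,
    MeasureTheory.integral_Ioc_eq_integral_Ioo]
  exact MeasureTheory.setIntegral_congr_fun measurableSet_Ioo h

lemma integral_linear (m q a b : ℝ) :
    (∫ x in a..b, (m * x + q)) = m * (b ^ 2 - a ^ 2) / 2 + q * (b - a) := by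
  have h1 : IntervalIntegrable (fun x : ℝ => m * x) volume a b :=
    ((continuous_const.mul continuous_id).intervalIntegrable a b)
  have h2 : IntervalIntegrable (fun _ : ℝ => q) volume a b := intervalIntegrable_const
  rw [intervalIntegral.integral_add h1 h2, intervalIntegral.integral_const,
    intervalIntegral.integral_const_mul, integral_id, smul_eq_mul]
  ring

lemma asc_eq (β₁ : ℝ) (c : ℝ) :
    ascendingBranch (butterflyWeight β₁) (-β₁) β₁ c
      = ∫ x : ℝ, Wasc β₁ x * (if x < c then (1 : ℝ) else -1) := by
  have hT : MeasurableSet (preisachTriangle (-β₁) β₁) := by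
    unfold preisachTriangle
    simp only [Set.setOf_and]
    exact (measurableSet_le measurable_const measurable_snd).inter
      ((measurableSet_le measurable_snd measurable_fst).inter
        (measurableSet_le measurable_fst measurable_const))
  have hc : Measurable fun p : ℝ × ℝ => if p.1 < c then (1 : ℝ) else -1 :=
    Measurable.ite (measurableSet_lt measurable_fst measurable_const)
      measurable_const measurable_const
  have hbc : ∀ p : ℝ × ℝ, |if p.1 < c then (1 : ℝ) else -1| ≤ 1 := by
    intro p; split_ifs <;> norm_num
  have hint : Integrable (fun p : ℝ × ℝ =>
      butterflyWeight β₁ p * (if p.1 < c then (1 : ℝ) else -1))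
      ((volume : Measure ℝ).prod (volume : Measure ℝ)) := by
    rw [← MeasureTheory.Measure.volume_eq_prod]
    exact integrable_butterfly_mul β₁ _ hc hbc
  unfold ascendingBranch
  rw [← MeasureTheory.integral_indicator hT]
  have heq : (fun p : ℝ × ℝ => (preisachTriangle (-β₁) β₁).indicator
      (fun q => butterflyWeight β₁ q * (if q.1 < c then (1 : ℝ) else -1)) p)
      = fun p : ℝ × ℝ => butterflyWeight β₁ p * (if p.1 < c then (1 : ℝ) else -1) :=
    funext (butterfly_indicator β₁ _)
  rw [heq, MeasureTheory.Measure.volume_eq_prod,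
    MeasureTheory.integral_prod _ hint]
  refine integral_congr_ae (Filter.Eventually.of_forall fun x => ?_)
  show (∫ y : ℝ, butterflyWeight β₁ (x, y) * (if x < c then (1 : ℝ) else -1))
      = Wasc β₁ x * (if x < c then (1 : ℝ) else -1)
  rw [MeasureTheory.integral_mul_const, inner_asc β₁ x]

lemma desc_eq (β₁ : ℝ) (c : ℝ) :
    descendingBranch (butterflyWeight β₁) (-β₁) β₁ c
      = ∫ y : ℝ, Wdesc β₁ y * (if y > c then (-1 : ℝ) else 1) := by
  have hT : MeasurableSet (preisachTriangle (-β₁) β₁) := by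
    unfold preisachTriangle
    simp only [Set.setOf_and]
    exact (measurableSet_le measurable_const measurable_snd).inter
      ((measurableSet_le measurable_snd measurable_fst).inter
        (measurableSet_le measurable_fst measurable_const))
  have hc : Measurable fun p : ℝ × ℝ => if p.2 > c then (-1 : ℝ) else 1 :=
    Measurable.ite (measurableSet_lt measurable_const measurable_snd)
      measurable_const measurable_const
  have hbc : ∀ p : ℝ × ℝ, |if p.2 > c then (-1 : ℝ) else 1| ≤ 1 := by
    intro p; split_ifs <;> norm_num
  have hint : Integrable (fun p : ℝ × ℝ =>
      butterflyWeight β₁ p * (if p.2 > c then (-1 : ℝ) else 1))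
      ((volume : Measure ℝ).prod (volume : Measure ℝ)) := by
    rw [← MeasureTheory.Measure.volume_eq_prod]
    exact integrable_butterfly_mul β₁ _ hc hbc
  unfold descendingBranch
  rw [← MeasureTheory.integral_indicator hT]
  have heq : (fun p : ℝ × ℝ => (preisachTriangle (-β₁) β₁).indicator
      (fun q => butterflyWeight β₁ q * (if q.2 > c then (-1 : ℝ) else 1)) p)
      = fun p : ℝ × ℝ => butterflyWeight β₁ p * (if p.2 > c then (-1 : ℝ) else 1) :=
    funext (butterfly_indicator β₁ _)
  rw [heq, MeasureTheory.Measure.volume_eq_prod,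
    MeasureTheory.integral_prod_symm _ hint]
  have h0 : ∀ᵐ y : ℝ, y ≠ (0 : ℝ) := by
    refine MeasureTheory.ae_iff.2 ?_
    simp only [ne_eq, not_not, Set.setOf_eq_eq_singleton]
    exact Real.volume_singleton
  refine integral_congr_ae ?_
  filter_upwards [h0] with y hy
  show (∫ x : ℝ, butterflyWeight β₁ (x, y) * (if y > c then (-1 : ℝ) else 1))
      = Wdesc β₁ y * (if y > c then (-1 : ℝ) else 1)
  rw [MeasureTheory.integral_mul_const, inner_desc β₁ y hy]

theorem butterfly_branches_closed_form (β₁ : ℝ) (hβ₁ : 0 < β₁) :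
    (∀ c ∈ Set.Icc (-β₁) (0 : ℝ),
      ascendingBranch (butterflyWeight β₁) (-β₁) β₁ c = -(β₁ + c) ^ 2) ∧
    (∀ c ∈ Set.Icc (0 : ℝ) β₁,
      ascendingBranch (butterflyWeight β₁) (-β₁) β₁ c
        = -(β₁ - c) * (β₁ + 3 * c)) ∧
    (∀ c ∈ Set.Icc (0 : ℝ) β₁,
      descendingBranch (butterflyWeight β₁) (-β₁) β₁ c = -(β₁ - c) ^ 2) ∧
    (∀ c ∈ Set.Icc (-β₁) (0 : ℝ),
      descendingBranch (butterflyWeight β₁) (-β₁) β₁ c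
        = -(β₁ + c) * (β₁ - 3 * c)) := by
  refine ⟨?_, ?_, ?_, ?_⟩
  · -- ascending branch, c ∈ [-β₁, 0]
    rintro c ⟨hc1, hc2⟩
    have hS : Measurable fun x : ℝ => if x < c then (1 : ℝ) else -1 :=
      Measurable.ite (measurableSet_lt measurable_id measurable_const)
        measurable_const measurable_const
    have hSb : ∀ x : ℝ, |if x < c then (1 : ℝ) else -1| ≤ 1 := by
      intro x; split_ifs <;> norm_num
    have hint : Integrable (fun x => Wasc β₁ x * (if x < c then (1 : ℝ) else -1)) :=
      integrable_W_mul β₁ hβ₁ _ (measurable_Wasc β₁) (Wasc_zero β₁) (abs_Wasc_le β₁ hβ₁)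
        _ hS hSb
    rw [asc_eq β₁ c,
      integral_eq_intervalIntegral β₁ hβ₁ _
        (fun x hx => by rw [Wasc_zero β₁ x hx, zero_mul]),
      ← split3 _ hint (-β₁) c 0 β₁]
    have P1 : (∫ x in (-β₁)..c, Wasc β₁ x * (if x < c then (1 : ℝ) else -1))
        = ∫ x in (-β₁)..c, ((-1 : ℝ) * x + (-β₁)) := by
      refine intervalIntegral_congr_Ioo hc1 _ _ fun x hx => ?_
      obtain ⟨ha, hb⟩ := hx
      unfold Wasc
      rw [if_pos (⟨ha, by linarith⟩ : -β₁ < x ∧ x < β₁), if_pos (by linarith : x ≤ (0 : ℝ)),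
        if_pos hb]
      ring
    have P2 : (∫ x in c..(0 : ℝ), Wasc β₁ x * (if x < c then (1 : ℝ) else -1))
        = ∫ x in c..(0 : ℝ), ((1 : ℝ) * x + β₁) := by
      refine intervalIntegral_congr_Ioo hc2 _ _ fun x hx => ?_
      obtain ⟨ha, hb⟩ := hx
      unfold Wasc
      rw [if_pos (⟨by linarith, by linarith⟩ : -β₁ < x ∧ x < β₁),
        if_pos (le_of_lt hb), if_neg (not_lt.2 ha.le)]
      ring
    have P3 : (∫ x in (0 : ℝ)..β₁, Wasc β₁ x * (if x < c then (1 : ℝ) else -1))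
        = ∫ x in (0 : ℝ)..β₁, ((-3 : ℝ) * x + β₁) := by
      refine intervalIntegral_congr_Ioo hβ₁.le _ _ fun x hx => ?_
      obtain ⟨ha, hb⟩ := hx
      unfold Wasc
      rw [if_pos (⟨by linarith, hb⟩ : -β₁ < x ∧ x < β₁), if_neg (not_le.2 ha),
        if_neg (not_lt.2 (hc2.trans ha.le))]
      ring
    rw [P1, P2, P3, integral_linear, integral_linear, integral_linear]
    ring
  · -- ascending branch, c ∈ [0, β₁]
    rintro c ⟨hc1, hc2⟩
    have hS : Measurable fun x : ℝ => if x < c then (1 : ℝ) else -1 :=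
      Measurable.ite (measurableSet_lt measurable_id measurable_const)
        measurable_const measurable_const
    have hSb : ∀ x : ℝ, |if x < c then (1 : ℝ) else -1| ≤ 1 := by
      intro x; split_ifs <;> norm_num
    have hint : Integrable (fun x => Wasc β₁ x * (if x < c then (1 : ℝ) else -1)) :=
      integrable_W_mul β₁ hβ₁ _ (measurable_Wasc β₁) (Wasc_zero β₁) (abs_Wasc_le β₁ hβ₁)
        _ hS hSb
    rw [asc_eq β₁ c,
      integral_eq_intervalIntegral β₁ hβ₁ _
        (fun x hx => by rw [Wasc_zero β₁ x hx, zero_mul]),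
      ← split3 _ hint (-β₁) 0 c β₁]
    have P1 : (∫ x in (-β₁)..(0 : ℝ), Wasc β₁ x * (if x < c then (1 : ℝ) else -1))
        = ∫ x in (-β₁)..(0 : ℝ), ((-1 : ℝ) * x + (-β₁)) := by
      refine intervalIntegral_congr_Ioo (by linarith) _ _ fun x hx => ?_
      obtain ⟨ha, hb⟩ := hx
      unfold Wasc
      rw [if_pos (⟨ha, by linarith⟩ : -β₁ < x ∧ x < β₁), if_pos hb.le,
        if_pos (lt_of_lt_of_le hb hc1)]
      ring
    have P2 : (∫ x in (0 : ℝ)..c, Wasc β₁ x * (if x < c then (1 : ℝ) else -1))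
        = ∫ x in (0 : ℝ)..c, ((3 : ℝ) * x + (-β₁)) := by
      refine intervalIntegral_congr_Ioo hc1 _ _ fun x hx => ?_
      obtain ⟨ha, hb⟩ := hx
      unfold Wasc
      rw [if_pos (⟨by linarith, by linarith⟩ : -β₁ < x ∧ x < β₁),
        if_neg (not_le.2 ha), if_pos hb]
      ring
    have P3 : (∫ x in c..β₁, Wasc β₁ x * (if x < c then (1 : ℝ) else -1))
        = ∫ x in c..β₁, ((-3 : ℝ) * x + β₁) := by
      refine intervalIntegral_congr_Ioo hc2 _ _ fun x hx => ?_
      obtain ⟨ha, hb⟩ := hx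
      unfold Wasc
      rw [if_pos (⟨by linarith, hb⟩ : -β₁ < x ∧ x < β₁),
        if_neg (not_le.2 (lt_of_le_of_lt hc1 ha)), if_neg (not_lt.2 ha.le)]
      ring
    rw [P1, P2, P3, integral_linear, integral_linear, integral_linear]
    ring
  · -- descending branch, c ∈ [0, β₁]
    rintro c ⟨hc1, hc2⟩
    have hS : Measurable fun y : ℝ => if y > c then (-1 : ℝ) else 1 :=
      Measurable.ite (measurableSet_lt measurable_const measurable_id)
        measurable_const measurable_const
    have hSb : ∀ y : ℝ, |if y > c then (-1 : ℝ) else 1| ≤ 1 := by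
      intro y; split_ifs <;> norm_num
    have hint : Integrable (fun y => Wdesc β₁ y * (if y > c then (-1 : ℝ) else 1)) :=
      integrable_W_mul β₁ hβ₁ _ (measurable_Wdesc β₁) (Wdesc_zero β₁)
        (abs_Wdesc_le β₁ hβ₁) _ hS hSb
    rw [desc_eq β₁ c,
      integral_eq_intervalIntegral β₁ hβ₁ _
        (fun y hy => by rw [Wdesc_zero β₁ y hy, zero_mul]),
      ← split3 _ hint (-β₁) 0 c β₁]
    have P1 : (∫ y in (-β₁)..(0 : ℝ), Wdesc β₁ y * (if y > c then (-1 : ℝ) else 1))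
        = ∫ y in (-β₁)..(0 : ℝ), ((3 : ℝ) * y + β₁) := by
      refine intervalIntegral_congr_Ioo (by linarith) _ _ fun y hy => ?_
      obtain ⟨ha, hb⟩ := hy
      unfold Wdesc
      rw [if_pos (⟨ha, by linarith⟩ : -β₁ < y ∧ y < β₁), if_pos hb.le,
        if_neg (not_lt.2 (by linarith : y ≤ c))]
      ring
    have P2 : (∫ y in (0 : ℝ)..c, Wdesc β₁ y * (if y > c then (-1 : ℝ) else 1))
        = ∫ y in (0 : ℝ)..c, ((-1 : ℝ) * y + β₁) := by
      refine intervalIntegral_congr_Ioo hc1 _ _ fun y hy => ?_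
      obtain ⟨ha, hb⟩ := hy
      unfold Wdesc
      rw [if_pos (⟨by linarith, by linarith⟩ : -β₁ < y ∧ y < β₁),
        if_neg (not_le.2 ha), if_neg (not_lt.2 hb.le)]
      ring
    have P3 : (∫ y in c..β₁, Wdesc β₁ y * (if y > c then (-1 : ℝ) else 1))
        = ∫ y in c..β₁, ((1 : ℝ) * y + (-β₁)) := by
      refine intervalIntegral_congr_Ioo hc2 _ _ fun y hy => ?_
      obtain ⟨ha, hb⟩ := hy
      unfold Wdesc
      rw [if_pos (⟨by linarith, hb⟩ : -β₁ < y ∧ y < β₁),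
        if_neg (not_le.2 (lt_of_le_of_lt hc1 ha)), if_pos ha]
      ring
    rw [P1, P2, P3, integral_linear, integral_linear, integral_linear]
    ring
  · -- descending branch, c ∈ [-β₁, 0]
    rintro c ⟨hc1, hc2⟩
    have hS : Measurable fun y : ℝ => if y > c then (-1 : ℝ) else 1 :=
      Measurable.ite (measurableSet_lt measurable_const measurable_id)
        measurable_const measurable_const
    have hSb : ∀ y : ℝ, |if y > c then (-1 : ℝ) else 1| ≤ 1 := by
      intro y; split_ifs <;> norm_num
    have hint : Integrable (fun y => Wdesc β₁ y * (if y > c then (-1 : ℝ) else 1)) :=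
      integrable_W_mul β₁ hβ₁ _ (measurable_Wdesc β₁) (Wdesc_zero β₁)
        (abs_Wdesc_le β₁ hβ₁) _ hS hSb
    rw [desc_eq β₁ c,
      integral_eq_intervalIntegral β₁ hβ₁ _
        (fun y hy => by rw [Wdesc_zero β₁ y hy, zero_mul]),
      ← split3 _ hint (-β₁) c 0 β₁]
    have P1 : (∫ y in (-β₁)..c, Wdesc β₁ y * (if y > c then (-1 : ℝ) else 1))
        = ∫ y in (-β₁)..c, ((3 : ℝ) * y + β₁) := by
      refine intervalIntegral_congr_Ioo hc1 _ _ fun y hy => ?_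
      obtain ⟨ha, hb⟩ := hy
      unfold Wdesc
      rw [if_pos (⟨ha, by linarith⟩ : -β₁ < y ∧ y < β₁), if_pos (by linarith : y ≤ (0 : ℝ)),
        if_neg (not_lt.2 hb.le)]
      ring
    have P2 : (∫ y in c..(0 : ℝ), Wdesc β₁ y * (if y > c then (-1 : ℝ) else 1))
        = ∫ y in c..(0 : ℝ), ((-3 : ℝ) * y + (-β₁)) := by
      refine intervalIntegral_congr_Ioo hc2 _ _ fun y hy => ?_
      obtain ⟨ha, hb⟩ := hy
      unfold Wdesc
      rw [if_pos (⟨by linarith, by linarith⟩ : -β₁ < y ∧ y < β₁),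
        if_pos hb.le, if_pos ha]
      ring
    have P3 : (∫ y in (0 : ℝ)..β₁, Wdesc β₁ y * (if y > c then (-1 : ℝ) else 1))
        = ∫ y in (0 : ℝ)..β₁, ((1 : ℝ) * y + (-β₁)) := by
      refine intervalIntegral_congr_Ioo hβ₁.le _ _ fun y hy => ?_
      obtain ⟨ha, hb⟩ := hy
      unfold Wdesc
      rw [if_pos (⟨by linarith, hb⟩ : -β₁ < y ∧ y < β₁),
        if_neg (not_le.2 ha), if_pos (lt_of_le_of_lt hc2 ha)]
      ring
    rw [P1, P2, P3, integral_linear, integral_linear, integral_linear]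
    ring
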